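/- Let σ_0, σ_1, …, σ_T be a sequence of schedules in which each step from σ_t to σ_{t+1} is an improving k-swap of type-1. Suppose that at step t the swap uses critical machine i, machine i', and sets A, B, where i' is the machine with the ℓ-th smallest load among all m machines under σ_t. Then at no later step t' with t < t' < T does the swap use the same pair of sets (A, B) (A taken from the critical machine and B taken from the other machine) with the other machine being the machine with the ℓ-th smallest load among all m machines under σ_{t'}. -/

import Mathlib

open Finset

/-- The load of machine `i` under schedule `σ` with processing times `p`. -/
noncomputable def load {n m : ℕ} (p : Fin n → ℝ) (σ : Fin n → Fin m) (i : Fin m) : ℝ :=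
  ∑ j ∈ Finset.univ.filter (fun j => σ j = i), p j

/-- The makespan (maximum machine load) of schedule `σ`. -/
noncomputable def Lmax {n m : ℕ} (p : Fin n → ℝ) (σ : Fin n → Fin m) : ℝ :=
  ⨆ i, load p σ i

/-- `δ_min`: the minimum of `|p(A) - p(B)|` over disjoint finsets of jobs `A`, `B`
with `1 ≤ |A| + |B| ≤ k`. -/
noncomputable def deltaMin (n k : ℕ) (p : Fin n → ℝ) : ℝ :=
  sInf { x | ∃ A B : Finset (Fin n), Disjoint A B ∧ 1 ≤ A.card + B.card ∧
    A.card + B.card ≤ k ∧ x = |∑ j ∈ A, p j - ∑ j ∈ B, p j| }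

/-- An improving `k`-swap from `σ` to `σ'`, with critical machine `i`, machine `i' ≠ i`,
and disjoint job sets `A ⊆ σ⁻¹ {i}`, `B ⊆ σ⁻¹ {i'}` with `|A| ≥ 1`, `|A| + |B| ≤ k` and
`0 < p(A) - p(B) < L_i(σ) - L_{i'}(σ)`; `σ'` sends `A` to `i'`, `B` to `i`, and agrees
with `σ` elsewhere. -/
def IsImprovingKSwap (k : ℕ) {n m : ℕ} (p : Fin n → ℝ) (σ σ' : Fin n → Fin m)
    (i i' : Fin m) (A B : Finset (Fin n)) : Prop :=
  load p σ i = Lmax p σ ∧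
  i' ≠ i ∧
  Disjoint A B ∧
  (∀ j ∈ A, σ j = i) ∧ (∀ j ∈ B, σ j = i') ∧
  1 ≤ A.card ∧ A.card + B.card ≤ k ∧
  0 < (∑ j ∈ A, p j) - ∑ j ∈ B, p j ∧
  (∑ j ∈ A, p j) - (∑ j ∈ B, p j) < load p σ i - load p σ i' ∧
  (∀ j ∈ A, σ' j = i') ∧ (∀ j ∈ B, σ' j = i) ∧
  ∀ j, j ∉ A → j ∉ B → σ' j = σ j

/-- The set `γ_s(σ)` of machines whose load is at most `L_max(σ) - δ_min`. -/
noncomputable def gammaS (k : ℕ) {n m : ℕ} (p : Fin n → ℝ) (σ : Fin n → Fin m) :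
    Finset (Fin m) :=
  Finset.univ.filter (fun i => load p σ i ≤ Lmax p σ - deltaMin n k p)

/-- The potential `Φ(σ) = ∑_{(i,i')} |L_i(σ) - L_{i'}(σ)|` over ordered pairs of machines. -/
noncomputable def potential {n m : ℕ} (p : Fin n → ℝ) (σ : Fin n → Fin m) : ℝ :=
  ∑ i : Fin m, ∑ i' : Fin m, |load p σ i - load p σ i'|


/-- The (0-indexed) rank of machine `i` under schedule `σ`: its position when machines are
sorted by nondecreasing load, ties broken by the fixed ordering of the machine indices.
Machine `i` is the (1-indexed) `ℓ`-th smallest load machine iff `rank p σ i + 1 = ℓ`. -/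
noncomputable def rank {n m : ℕ} (p : Fin n → ℝ) (σ : Fin n → Fin m) (i : Fin m) : ℕ :=
  (Finset.univ.filter (fun j => load p σ j < load p σ i ∨
    (load p σ j = load p σ i ∧ j < i))).card

-- auxiliary development
namespace NoRepeatAux

variable {n m : ℕ}

noncomputable def cntlt (p : Fin n → ℝ) (σ : Fin n → Fin m) (τ : ℝ) : ℕ :=
  (Finset.univ.filter (fun x => load p σ x < τ)).card

noncomputable def cntle (p : Fin n → ℝ) (σ : Fin n → Fin m) (τ : ℝ) : ℕ :=
  (Finset.univ.filter (fun x => load p σ x ≤ τ)).card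

lemma cntlt_mono (p : Fin n → ℝ) (σ : Fin n → Fin m) {τ τ' : ℝ} (h : τ ≤ τ') :
    cntlt p σ τ ≤ cntlt p σ τ' := by
  apply card_le_card
  intro x hx
  simp only [mem_filter, mem_univ, true_and] at hx ⊢
  linarith

lemma cntle_mono (p : Fin n → ℝ) (σ : Fin n → Fin m) {τ τ' : ℝ} (h : τ ≤ τ') :
    cntle p σ τ ≤ cntle p σ τ' := by
  apply card_le_card
  intro x hx
  simp only [mem_filter, mem_univ, true_and] at hx ⊢
  linarith

lemma cntlt_le_cntle (p : Fin n → ℝ) (σ : Fin n → Fin m) {τ τ' : ℝ} (h : τ ≤ τ') :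
    cntlt p σ τ ≤ cntle p σ τ' := by
  apply card_le_card
  intro x hx
  simp only [mem_filter, mem_univ, true_and] at hx ⊢
  linarith

lemma cntle_le_cntlt (p : Fin n → ℝ) (σ : Fin n → Fin m) {τ τ' : ℝ} (h : τ < τ') :
    cntle p σ τ ≤ cntlt p σ τ' := by
  apply card_le_card
  intro x hx
  simp only [mem_filter, mem_univ, true_and] at hx ⊢
  linarith

lemma load_le_Lmax (hm : 0 < m) (p : Fin n → ℝ) (σ : Fin n → Fin m) (x : Fin m) :
    load p σ x ≤ Lmax p σ := by
  haveI : Nonempty (Fin m) := ⟨⟨0, hm⟩⟩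
  exact le_ciSup (Set.Finite.bddAbove (Set.finite_range _)) x

lemma deltaMin_le' {k : ℕ} (p : Fin n → ℝ) {A B : Finset (Fin n)}
    (hd : Disjoint A B) (h1 : 1 ≤ A.card + B.card) (h2 : A.card + B.card ≤ k) :
    deltaMin n k p ≤ |∑ j ∈ A, p j - ∑ j ∈ B, p j| := by
  apply csInf_le
  · refine ⟨0, ?_⟩
    rintro x ⟨A', B', _, _, _, rfl⟩
    exact abs_nonneg _
  · exact ⟨A, B, hd, h1, h2, rfl⟩

/-- loads after a swap -/
lemma load_swap {k : ℕ} {p : Fin n → ℝ} {σ σ' : Fin n → Fin m} {i i' : Fin m}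
    {As Bs : Finset (Fin n)} (hsw : IsImprovingKSwap k p σ σ' i i' As Bs) :
    (∀ x, x ≠ i → x ≠ i' → load p σ' x = load p σ x) ∧
    load p σ' i = load p σ i - (∑ j ∈ As, p j) + (∑ j ∈ Bs, p j) ∧
    load p σ' i' = load p σ i' + (∑ j ∈ As, p j) - (∑ j ∈ Bs, p j) := by
  obtain ⟨_, hii, hdisj, hAs, hBs, _, _, _, _, hAs', hBs', hoth⟩ := hsw
  refine ⟨?_, ?_, ?_⟩
  · intro x hxi hxi'
    unfold load
    congr 1
    ext j
    simp only [mem_filter, mem_univ, true_and]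
    by_cases hjA : j ∈ As
    · rw [hAs' j hjA, hAs j hjA]
      exact ⟨fun hh => absurd hh.symm hxi', fun hh => absurd hh.symm hxi⟩
    · by_cases hjB : j ∈ Bs
      · rw [hBs' j hjB, hBs j hjB]
        exact ⟨fun hh => absurd hh.symm hxi, fun hh => absurd hh.symm hxi'⟩
      · rw [hoth j hjA hjB]
  · have hset : Finset.univ.filter (fun j => σ' j = i) =
        Bs ∪ (Finset.univ.filter (fun j => σ j = i) \ As) := by
      ext j
      simp only [mem_filter, mem_union, mem_sdiff, mem_univ, true_and]
      by_cases hjA : j ∈ As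
      · rw [hAs' j hjA]
        constructor
        · intro hh; exact absurd hh hii
        · rintro (hjB | ⟨_, hnA⟩)
          · exact absurd hjB (Finset.disjoint_left.mp hdisj hjA)
          · exact absurd hjA hnA
      · by_cases hjB : j ∈ Bs
        · rw [hBs' j hjB]
          simp [hjB]
        · rw [hoth j hjA hjB]
          constructor
          · intro hh; exact Or.inr ⟨hh, hjA⟩
          · rintro (hjB' | ⟨hh, _⟩)
            · exact absurd hjB' hjB
            · exact hh
    have hdu : Disjoint Bs ((Finset.univ.filter (fun j => σ j = i)) \ As) := by
      rw [Finset.disjoint_left]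
      intro j hjB hmem
      rw [mem_sdiff, mem_filter] at hmem
      have := hBs j hjB
      rw [this] at hmem
      exact hii hmem.1.2
    have hsub : As ⊆ Finset.univ.filter (fun j => σ j = i) := by
      intro j hj
      simp only [mem_filter, mem_univ, true_and]
      exact hAs j hj
    show (∑ j ∈ Finset.univ.filter (fun j => σ' j = i), p j) = _
    rw [hset, sum_union hdu, sum_sdiff_eq_sub hsub]
    unfold load
    ring
  · have hset : Finset.univ.filter (fun j => σ' j = i') =
        As ∪ (Finset.univ.filter (fun j => σ j = i') \ Bs) := by
      ext j
      simp only [mem_filter, mem_union, mem_sdiff, mem_univ, true_and]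
      by_cases hjB : j ∈ Bs
      · rw [hBs' j hjB]
        constructor
        · intro hh; exact absurd hh.symm hii
        · rintro (hjA | ⟨_, hnB⟩)
          · exact absurd hjA (Finset.disjoint_right.mp hdisj hjB)
          · exact absurd hjB hnB
      · by_cases hjA : j ∈ As
        · rw [hAs' j hjA]
          simp [hjA]
        · rw [hoth j hjA hjB]
          constructor
          · intro hh; exact Or.inr ⟨hh, hjB⟩
          · rintro (hjA' | ⟨hh, _⟩)
            · exact absurd hjA' hjA
            · exact hh
    have hdu : Disjoint As ((Finset.univ.filter (fun j => σ j = i')) \ Bs) := by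
      rw [Finset.disjoint_left]
      intro j hjA hmem
      rw [mem_sdiff, mem_filter] at hmem
      have := hAs j hjA
      rw [this] at hmem
      exact hii hmem.1.2.symm
    have hsub : Bs ⊆ Finset.univ.filter (fun j => σ j = i') := by
      intro j hj
      simp only [mem_filter, mem_univ, true_and]
      exact hBs j hj
    show (∑ j ∈ Finset.univ.filter (fun j => σ' j = i'), p j) = _
    rw [hset, sum_union hdu, sum_sdiff_eq_sub hsub]
    unfold load
    ring

/-- counting transfer across a swap, strict version -/
lemma cntlt_step {p : Fin n → ℝ} {σ σ' : Fin n → Fin m} {i i' : Fin m}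
    (hii : i' ≠ i)
    (hoth : ∀ x, x ≠ i → x ≠ i' → load p σ' x = load p σ x)
    (ha : load p σ i' < load p σ' i)
    {τ : ℝ} (hτ : τ ≤ load p σ' i') :
    cntlt p σ' τ ≤ cntlt p σ τ := by
  apply Finset.card_le_card_of_injOn (fun x => if x = i then i' else x)
  · intro x hx
    simp only [coe_filter, Set.mem_setOf_eq, mem_filter, mem_univ, true_and] at hx ⊢
    have hxne : x ≠ i' := by
      intro hh
      rw [hh] at hx
      linarith
    by_cases hxi : x = i
    · rw [if_pos hxi]
      rw [hxi] at hx
      linarith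
    · rw [if_neg hxi, ← hoth x hxi hxne]
      exact hx
  · intro x hx y hy hxy
    dsimp only at hxy
    simp only [coe_filter, Set.mem_setOf_eq, mem_univ, true_and] at hx hy
    have hxne : x ≠ i' := by
      intro hh; rw [hh] at hx; linarith
    have hyne : y ≠ i' := by
      intro hh; rw [hh] at hy; linarith
    by_cases hxi : x = i <;> by_cases hyi : y = i
    · rw [hxi, hyi]
    · rw [if_pos hxi, if_neg hyi] at hxy
      exact absurd hxy.symm hyne
    · rw [if_neg hxi, if_pos hyi] at hxy
      exact absurd hxy hxne
    · rw [if_neg hxi, if_neg hyi] at hxy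
      exact hxy

/-- counting transfer across a swap, weak version -/
lemma cntle_step {p : Fin n → ℝ} {σ σ' : Fin n → Fin m} {i i' : Fin m}
    (hii : i' ≠ i)
    (hoth : ∀ x, x ≠ i → x ≠ i' → load p σ' x = load p σ x)
    (ha : load p σ i' < load p σ' i)
    {τ : ℝ} (hτ : τ < load p σ' i') :
    cntle p σ' τ ≤ cntle p σ τ := by
  apply Finset.card_le_card_of_injOn (fun x => if x = i then i' else x)
  · intro x hx
    simp only [coe_filter, Set.mem_setOf_eq, mem_filter, mem_univ, true_and] at hx ⊢
    have hxne : x ≠ i' := by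
      intro hh
      rw [hh] at hx
      linarith
    by_cases hxi : x = i
    · rw [if_pos hxi]
      rw [hxi] at hx
      linarith
    · rw [if_neg hxi, ← hoth x hxi hxne]
      exact hx
  · intro x hx y hy hxy
    dsimp only at hxy
    simp only [coe_filter, Set.mem_setOf_eq, mem_univ, true_and] at hx hy
    have hxne : x ≠ i' := by
      intro hh; rw [hh] at hx; linarith
    have hyne : y ≠ i' := by
      intro hh; rw [hh] at hy; linarith
    by_cases hxi : x = i <;> by_cases hyi : y = i
    · rw [hxi, hyi]
    · rw [if_pos hxi, if_neg hyi] at hxy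
      exact absurd hxy.symm hyne
    · rw [if_neg hxi, if_pos hyi] at hxy
      exact absurd hxy hxne
    · rw [if_neg hxi, if_neg hyi] at hxy
      exact hxy

/-- The invariant. -/
def Inv (p : Fin n → ℝ) (A : Finset (Fin n)) (d δ : ℝ) (r : ℕ)
    (σ : Fin n → Fin m) : Prop :=
  cntle p σ (Lmax p σ - d - δ) ≤ r ∧
  (∀ h, (∀ j ∈ A, σ j = h) → cntlt p σ (load p σ h - d) ≤ r) ∧
  ((∀ h, (∀ j ∈ A, σ j = h) → load p σ h ≤ Lmax p σ - δ) →
    cntlt p σ (Lmax p σ - d) ≤ r)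


lemma closure {k : ℕ} (hm : 0 < m) {p : Fin n → ℝ}
    {σ σ' : Fin n → Fin m} {i i' : Fin m} {As Bs : Finset (Fin n)}
    (hsw : IsImprovingKSwap k p σ σ' i i' As Bs)
    {A : Finset (Fin n)} {d δ : ℝ} (hA : A.Nonempty) (hδ : 0 < δ) (hδd : δ ≤ d)
    (hδe : δ ≤ (∑ j ∈ As, p j) - ∑ j ∈ Bs, p j)
    (hg : Lmax p σ' - δ < load p σ' i')
    (hInv : Inv p A d δ r σ) : Inv p A d δ r σ' := by
  obtain ⟨hoth', hLdi, hLdi'⟩ := load_swap hsw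
  obtain ⟨hLi, hii, hdisj, hAs, hBs, hcard1, hcardk, he0, himp, hAs', hBs', hoth⟩ := hsw
  set a := load p σ i' with ha_def
  set e := (∑ j ∈ As, p j) - ∑ j ∈ Bs, p j with he_def
  have hLi' : load p σ' i' = a + e := by rw [hLdi']; ring
  have hLiM : load p σ' i = Lmax p σ - e := by rw [hLdi, hLi]; ring
  have himpe : e < Lmax p σ - a := by rw [← hLi]; exact himp
  have haM : a + e < Lmax p σ := by linarith
  have hM'le : Lmax p σ' ≤ Lmax p σ := by
    haveI : Nonempty (Fin m) := ⟨⟨0, hm⟩⟩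
    apply ciSup_le
    intro x
    by_cases hxi : x = i
    · rw [hxi, hLiM]; linarith
    · by_cases hxi' : x = i'
      · rw [hxi', hLi']; linarith
      · rw [hoth' x hxi hxi']; exact load_le_Lmax hm p σ x
  have ht1 : Lmax p σ' - δ < a + e := by rw [← hLi']; exact hg
  have hM'ge : a + e ≤ Lmax p σ' := by rw [← hLi']; exact load_le_Lmax hm p σ' i'
  have hai : a < load p σ' i := by rw [hLiM]; linarith
  obtain ⟨q1, q2, q5⟩ := hInv
  refine ⟨?_, ?_, ?_⟩
  · -- q1'
    have hτ : Lmax p σ' - d - δ < load p σ' i' := by rw [hLi']; linarith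
    calc cntle p σ' (Lmax p σ' - d - δ)
        ≤ cntle p σ (Lmax p σ' - d - δ) := cntle_step hii hoth' hai hτ
      _ ≤ cntle p σ (Lmax p σ - d - δ) := cntle_mono p σ (by linarith)
      _ ≤ r := q1
  · -- q2'
    intro h hwh
    by_cases hhi' : h = i'
    · rw [hhi'] at hwh ⊢
      have key : cntlt p σ (Lmax p σ - d) ≤ r := by
        by_cases hwi : ∀ j ∈ A, σ j = i
        · have h2 := q2 i hwi
          rw [hLi] at h2
          exact h2
        · apply q5
          intro h0 hwh0
          obtain ⟨j0, hj0⟩ := hA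
          by_cases hh0i : h0 = i
          · exact absurd (fun j hj => (hwh0 j hj).trans hh0i) hwi
          · have hh0i' : h0 = i' := by
              have hj0h0 : σ j0 = h0 := hwh0 j0 hj0
              by_cases hjB : j0 ∈ Bs
              · exact hj0h0.symm.trans (hBs j0 hjB)
              · have hjA : j0 ∉ As := fun hh => hh0i (hj0h0.symm.trans (hAs j0 hh))
                have h1 : σ' j0 = σ j0 := hoth j0 hjA hjB
                have h2 : σ' j0 = i' := hwh j0 hj0
                rw [h1, hj0h0] at h2
                exact h2
            rw [hh0i']
            linarith
      have hτle : load p σ' i' - d ≤ load p σ' i' := by linarith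
      calc cntlt p σ' (load p σ' i' - d)
          ≤ cntlt p σ (load p σ' i' - d) := cntlt_step hii hoth' hai hτle
        _ ≤ cntlt p σ (Lmax p σ - d) := cntlt_mono p σ (by rw [hLi']; linarith)
        _ ≤ r := key
    · by_cases hhi : h = i
      · rw [hhi] at hwh ⊢
        have hM2 : load p σ' i ≤ Lmax p σ' := load_le_Lmax hm p σ' i
        have hτ : load p σ' i - d ≤ load p σ' i' := by rw [hLi']; linarith
        calc cntlt p σ' (load p σ' i - d)
            ≤ cntlt p σ (load p σ' i - d) := cntlt_step hii hoth' hai hτ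
          _ ≤ cntle p σ (Lmax p σ - d - δ) := cntlt_le_cntle p σ (by rw [hLiM]; linarith)
          _ ≤ r := q1
      · have hwhσ : ∀ j ∈ A, σ j = h := by
          intro j hj
          have hjA : j ∉ As := fun hh => hhi' ((hwh j hj).symm.trans (hAs' j hh))
          have hjB : j ∉ Bs := fun hh => hhi ((hwh j hj).symm.trans (hBs' j hh))
          rw [← hoth j hjA hjB]
          exact hwh j hj
        have hload : load p σ' h = load p σ h := hoth' h hhi hhi'
        have hτ : load p σ' h - d ≤ load p σ' i' := by
          have hx : load p σ' h ≤ Lmax p σ' := load_le_Lmax hm p σ' h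
          rw [hLi']; linarith
        calc cntlt p σ' (load p σ' h - d)
            ≤ cntlt p σ (load p σ' h - d) := cntlt_step hii hoth' hai hτ
          _ = cntlt p σ (load p σ h - d) := by rw [hload]
          _ ≤ r := q2 h hwhσ
  · -- q5'
    intro hant
    have hτ : Lmax p σ' - d ≤ load p σ' i' := by rw [hLi']; linarith
    have key : cntlt p σ (Lmax p σ' - d) ≤ r := by
      by_cases hM'c : Lmax p σ' ≤ Lmax p σ - δ
      · exact le_trans (cntlt_le_cntle p σ (by linarith)) q1
      · by_cases hex : ∃ h0, (∀ j ∈ A, σ j = h0) ∧ Lmax p σ - δ < load p σ h0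
        · obtain ⟨h0, hwh0, hnear⟩ := hex
          by_cases hh0i : h0 = i
          · rw [hh0i] at hwh0
            have h2 := q2 i hwh0
            rw [hLi] at h2
            exact le_trans (cntlt_mono p σ (by linarith)) h2
          · by_cases hh0i' : h0 = i'
            · rw [hh0i'] at hnear
              exact absurd hnear (not_lt.mpr (by linarith))
            · have hwh0' : ∀ j ∈ A, σ' j = h0 := by
                intro j hj
                have hjA : j ∉ As := fun hh => hh0i ((hwh0 j hj).symm.trans (hAs j hh))
                have hjB : j ∉ Bs := fun hh => hh0i' ((hwh0 j hj).symm.trans (hBs j hh))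
                rw [hoth j hjA hjB]
                exact hwh0 j hj
              have hle := hant h0 hwh0'
              rw [hoth' h0 hh0i hh0i'] at hle
              exact absurd hle (not_le.mpr (by linarith))
        · push_neg at hex
          have h5 := q5 (fun h0 hwh0 => hex h0 hwh0)
          exact le_trans (cntlt_mono p σ (by linarith)) h5
    calc cntlt p σ' (Lmax p σ' - d)
        ≤ cntlt p σ (Lmax p σ' - d) := cntlt_step hii hoth' hai hτ
      _ ≤ r := key

lemma base {k : ℕ} (hm : 0 < m) {p : Fin n → ℝ} {σ σ' : Fin n → Fin m} {i w : Fin m}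
    {A B : Finset (Fin n)} (hsw : IsImprovingKSwap k p σ σ' i w A B)
    {δ : ℝ}
    (hg : Lmax p σ' - δ < load p σ' w) :
    Inv p A ((∑ j ∈ A, p j) - ∑ j ∈ B, p j) δ (rank p σ w) σ' := by
  obtain ⟨hoth', hLdi, hLdw⟩ := load_swap hsw
  obtain ⟨hLi, hii, hdisj, hAs, hBs, hcard1, hcardk, hd0, himp, hAs', hBs', hoth⟩ := hsw
  set d := (∑ j ∈ A, p j) - ∑ j ∈ B, p j with hd_def
  set a := load p σ w with ha_def
  have hLw' : load p σ' w = a + d := by rw [hLdw]; ring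
  have hLi' : load p σ' i = load p σ i - d := by rw [hLdi]; ring
  have hbase : cntlt p σ' a ≤ rank p σ w := by
    apply card_le_card
    intro x hx
    simp only [mem_filter, mem_univ, true_and] at hx ⊢
    have hxw : x ≠ w := by
      intro hh
      rw [hh, hLw'] at hx
      linarith
    have hxi : x ≠ i := by
      intro hh
      rw [hh, hLi'] at hx
      linarith
    rw [hoth' x hxi hxw] at hx
    exact Or.inl hx
  refine ⟨?_, ?_, ?_⟩
  · have hτ : Lmax p σ' - d - δ < a := by
      rw [hLw'] at hg
      linarith
    exact le_trans (cntle_le_cntlt p σ' hτ) hbase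
  · intro h hwh
    obtain ⟨j0, hj0⟩ := Finset.card_pos.mp (by omega : 0 < A.card)
    have hhw : h = w := ((hwh j0 hj0).symm.trans (hAs' j0 hj0))
    rw [hhw, hLw']
    have heq : a + d - d = a := by ring
    rw [heq]
    exact hbase
  · intro hant
    have hw := hant w hAs'
    exact absurd hw (not_le.mpr hg)

lemma final {k : ℕ} {p : Fin n → ℝ} {σ σ' : Fin n → Fin m} {c g : Fin m}
    {A B : Finset (Fin n)} (hsw : IsImprovingKSwap k p σ σ' c g A B)
    {δ : ℝ} {r : ℕ}
    (hInv : Inv p A ((∑ j ∈ A, p j) - ∑ j ∈ B, p j) δ r σ)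
    (hr : rank p σ g = r) : False := by
  obtain ⟨hLc, hgc, _, hA, hB, hcard1, _, hd0, himp, _, _, _⟩ := hsw
  obtain ⟨q1, q2, q5⟩ := hInv
  have h2 := q2 c hA
  set d := (∑ j ∈ A, p j) - ∑ j ∈ B, p j with hd_def
  set RS := Finset.univ.filter (fun j => load p σ j < load p σ g ∨
    (load p σ j = load p σ g ∧ j < g)) with hRS_def
  have hgS : g ∉ RS := by
    simp only [hRS_def, mem_filter, mem_univ, true_and]
    push_neg
    exact ⟨le_refl _, le_refl g⟩
  have hcard : (insert g RS).card = r + 1 := by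
    rw [card_insert_of_notMem hgS]
    rw [← hr]
    rfl
  have hsub : insert g RS ⊆ Finset.univ.filter (fun x => load p σ x < load p σ c - d) := by
    intro x hx
    simp only [mem_filter, mem_univ, true_and]
    rcases mem_insert.mp hx with hxg | hxm
    · rw [hxg]
      linarith
    · simp only [hRS_def, mem_filter, mem_univ, true_and] at hxm
      rcases hxm with h1 | ⟨h1, _⟩
      · linarith
      · linarith
  have hge : r + 1 ≤ cntlt p σ (load p σ c - d) := by
    rw [← hcard]
    exact card_le_card hsub
  omega

end NoRepeatAux

/-- In a sequence of consecutive improving `k`-swaps of type-1, if at step `t` the sets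
`A t`, `B t` are swapped between a critical machine and the machine with the (1-indexed)
`ℓ`-th smallest load, then at no later step `t'` with `t < t' < T` is the same pair of
sets swapped between a critical machine and the machine with the `ℓ`-th smallest load. -/
theorem no_repeat_swap_type1 {n m k : ℕ} (hm : 2 ≤ m) (hk : 1 ≤ k)
    (p : Fin n → ℝ) (hp : ∀ j, 0 < p j) (hδ : 0 < deltaMin n k p)
    (T : ℕ) (σ : ℕ → Fin n → Fin m) (i i' : ℕ → Fin m)
    (A B : ℕ → Finset (Fin n))
    (hsteps : ∀ t < T, IsImprovingKSwap k p (σ t) (σ (t + 1)) (i t) (i' t) (A t) (B t) ∧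
      i' t ∉ gammaS k p (σ (t + 1)))
    (t : ℕ) (ht : t < T) (ℓ : ℕ) (hℓ : rank p (σ t) (i' t) + 1 = ℓ) :
    ∀ t', t < t' → t' < T →
      ¬(A t' = A t ∧ B t' = B t ∧ rank p (σ t') (i' t') + 1 = ℓ) := by
  intro t' htt' ht'T
  rintro ⟨hAeq, hBeq, hrank'⟩
  have hm0 : 0 < m := by omega
  obtain ⟨hsw_t, hγ_t⟩ := hsteps t ht
  have hg_t : Lmax p (σ (t+1)) - deltaMin n k p < load p (σ (t+1)) (i' t) := by
    by_contra hcon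
    push_neg at hcon
    exact hγ_t (Finset.mem_filter.mpr ⟨Finset.mem_univ _, hcon⟩)
  have h6 := hsw_t.2.2.2.2.2.1
  have hAne : (A t).Nonempty := Finset.card_pos.mp (by omega)
  have hd0 : 0 < (∑ j ∈ A t, p j) - ∑ j ∈ B t, p j := hsw_t.2.2.2.2.2.2.2.1
  have hδd : deltaMin n k p ≤ (∑ j ∈ A t, p j) - ∑ j ∈ B t, p j := by
    have h1 := NoRepeatAux.deltaMin_le' (k := k) p hsw_t.2.2.1 (by omega)
      hsw_t.2.2.2.2.2.2.1
    rwa [abs_of_pos hd0] at h1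
  have hInv0 := NoRepeatAux.base hm0 hsw_t hg_t
  have hInd : ∀ s, t + 1 ≤ s → s ≤ t' →
      NoRepeatAux.Inv p (A t) ((∑ j ∈ A t, p j) - ∑ j ∈ B t, p j) (deltaMin n k p)
        (rank p (σ t) (i' t)) (σ s) := by
    intro s hs1
    induction s, hs1 using Nat.le_induction with
    | base => intro _; exact hInv0
    | succ s hs IH =>
      intro hs'
      have hsT : s < T := by omega
      obtain ⟨hsw_s, hγ_s⟩ := hsteps s hsT
      have hg_s : Lmax p (σ (s+1)) - deltaMin n k p < load p (σ (s+1)) (i' s) := by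
        by_contra hcon
        push_neg at hcon
        exact hγ_s (Finset.mem_filter.mpr ⟨Finset.mem_univ _, hcon⟩)
      have h6s := hsw_s.2.2.2.2.2.1
      have he0 : 0 < (∑ j ∈ A s, p j) - ∑ j ∈ B s, p j := hsw_s.2.2.2.2.2.2.2.1
      have hδe : deltaMin n k p ≤ (∑ j ∈ A s, p j) - ∑ j ∈ B s, p j := by
        have h1 := NoRepeatAux.deltaMin_le' (k := k) p hsw_s.2.2.1 (by omega)
          hsw_s.2.2.2.2.2.2.1
        rwa [abs_of_pos he0] at h1
      exact NoRepeatAux.closure hm0 hsw_s hAne hδ hδd hδe hg_s (IH (by omega))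
  have hInvt' := hInd t' (by omega) le_rfl
  obtain ⟨hsw', _⟩ := hsteps t' ht'T
  rw [hAeq, hBeq] at hsw'
  exact NoRepeatAux.final hsw' hInvt' (by omega)
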